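/- As formal power series over ℚ, ∑_{n≥0} (x^n/n!) · ( ∑_{i=1}^{n} ((i+1)!/2) · S(n,i) ) = −(1/2) · (e^x − 1)(e^x − 3) · ((e^x − 2)^{−2}); equivalently, 2 · (e^x − 2)² · ∑_{n≥0} (x^n/n!) ∑_{i=1}^{n} ((i+1)!/2) S(n,i) = −(e^x − 1)(e^x − 3), where e^x denotes the formal exponential series and (e^x − 2)^{−1} the multiplicative inverse of the formal power series e^x − 2. -/

import Mathlib

open Finset PowerSeries Filter Nat

/-- The Stirling number of the second kind `S(n,k)`: the number of partitions of an
`n`-element set into `k` nonempty blocks. -/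
noncomputable def stirling2 (n k : ℕ) : ℕ :=
  Nat.card {P : Finpartition (Finset.univ : Finset (Fin n)) // P.parts.card = k}

open Function


section general

variable {α : Type*} [Fintype α] [DecidableEq α]

lemma Finpartition.parts_eq_image (P : Finpartition (univ : Finset α)) :
    P.parts = univ.image P.part := by
  ext t
  constructor
  · intro ht
    obtain ⟨x, hx⟩ := P.nonempty_of_mem_parts ht
    exact mem_image.2 ⟨x, mem_univ x, P.part_eq_of_mem ht hx⟩
  · rintro ht
    obtain ⟨x, -, rfl⟩ := mem_image.1 ht
    exact P.part_mem.2 (mem_univ x)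

end general

variable {n k : ℕ}

/-- the subtype of bijective functions is equivalent to equivs -/
noncomputable def bijSubtypeEquiv (α β : Type*) : {g : α → β // Function.Bijective g} ≃ (α ≃ β) where
  toFun g := Equiv.ofBijective g.1 g.2
  invFun e := ⟨e, e.bijective⟩
  left_inv g := Subtype.ext rfl
  right_inv e := Equiv.ext fun x => rfl

instance kerDecRel (f : Fin n → Fin k) : DecidableRel (Setoid.ker f).r :=
  fun a b => decidable_of_iff (f a = f b) Iff.rfl

def fiberPart (f : Fin n → Fin k) : Finpartition (univ : Finset (Fin n)) :=
  Finpartition.ofSetoid (Setoid.ker f)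

lemma fiberPart_part (f : Fin n → Fin k) (x : Fin n) :
    (fiberPart f).part x = univ.filter (fun y => f y = f x) := by
  classical
  ext y
  rw [fiberPart, Finpartition.mem_part_ofSetoid_iff_rel]
  simp [Setoid.ker, eq_comm]

lemma fiberPart_parts_card (f : Fin n → Fin k) (hf : Surjective f) :
    (fiberPart f).parts.card = k := by
  classical
  rw [Finpartition.parts_eq_image]
  have h1 : (univ : Finset (Fin n)).image (fiberPart f).part
      = (univ : Finset (Fin k)).image (fun j => univ.filter (fun y => f y = j)) := by
    ext t
    simp only [mem_image, mem_univ, true_and]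
    constructor
    · rintro ⟨x, rfl⟩; exact ⟨f x, (fiberPart_part f x).symm⟩
    · rintro ⟨j, rfl⟩
      obtain ⟨x, rfl⟩ := hf j
      exact ⟨x, fiberPart_part f x⟩
  rw [h1, Finset.card_image_of_injective _ ?_, Finset.card_univ, Fintype.card_fin]
  intro j₁ j₂ hj
  obtain ⟨x, hx⟩ := hf j₁
  have : x ∈ univ.filter (fun y => f y = j₂) := by
    rw [show univ.filter (fun y => f y = j₂) = univ.filter (fun y => f y = j₁) from hj.symm]
    simp [hx]
  simp only [mem_filter] at this
  rw [← hx, this.2]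

def PhiFun (P : Finpartition (univ : Finset (Fin n)))
    (g : {t // t ∈ P.parts} → Fin k) : Fin n → Fin k :=
  fun x => g ⟨P.part x, P.part_mem.2 (mem_univ x)⟩

lemma PhiFun_surj (P : Finpartition (univ : Finset (Fin n)))
    (g : {t // t ∈ P.parts} → Fin k) (hg : Surjective g) : Surjective (PhiFun P g) := by
  intro j
  obtain ⟨⟨t, ht⟩, rfl⟩ := hg j
  obtain ⟨x, hx⟩ := P.nonempty_of_mem_parts ht
  exact ⟨x, congrArg g (Subtype.ext (P.part_eq_of_mem ht hx))⟩

lemma fiberPart_PhiFun (P : Finpartition (univ : Finset (Fin n)))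
    (g : {t // t ∈ P.parts} → Fin k) (hg : Injective g) : fiberPart (PhiFun P g) = P := by
  have hpart : ∀ x, (fiberPart (PhiFun P g)).part x = P.part x := by
    intro x
    rw [fiberPart_part]
    ext y
    simp only [mem_filter, mem_univ, true_and]
    constructor
    · intro h
      have h2 : P.part y = P.part x := congrArg Subtype.val (hg h)
      rw [← P.mem_part_iff_part_eq_part (mem_univ y) (mem_univ x)] at h2
      exact h2
    · intro h
      have h2 : P.part y = P.part x :=
        (P.mem_part_iff_part_eq_part (mem_univ y) (mem_univ x)).1 h
      simp [PhiFun, h2]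
  ext t
  rw [Finpartition.parts_eq_image, Finpartition.parts_eq_image]
  simp only [mem_image, mem_univ, true_and]
  exact ⟨fun ⟨x, hx⟩ => ⟨x, by rw [← hpart x, hx]⟩, fun ⟨x, hx⟩ => ⟨x, by rw [hpart x, hx]⟩⟩

lemma key_fact (f : Fin n → Fin k) {t : Finset (Fin n)} (ht : t ∈ (fiberPart f).parts)
    {x y : Fin n} (hx : x ∈ t) (hy : y ∈ t) : f y = f x := by
  have h1 : t = (fiberPart f).part x := ((fiberPart f).part_eq_of_mem ht hx).symm
  rw [h1, fiberPart_part] at hy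
  exact (mem_filter.1 hy).2

abbrev SurjType (n k : ℕ) := {f : Fin n → Fin k // Surjective f}

abbrev DType (n k : ℕ) :=
  Σ P : {P : Finpartition (univ : Finset (Fin n)) // P.parts.card = k},
    {g : {t // t ∈ P.1.parts} → Fin k // Bijective g}

noncomputable def Phi : DType n k → SurjType n k := fun z =>
  ⟨PhiFun z.1.1 z.2.1, PhiFun_surj _ _ z.2.2.2⟩

lemma Phi_bijective : Bijective (Phi : DType n k → SurjType n k) := by
  constructor
  · rintro ⟨⟨P, hP⟩, g, hg⟩ ⟨⟨Q, hQ⟩, h, hh⟩ heq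
    have hf : PhiFun P g = PhiFun Q h := congrArg Subtype.val heq
    have hPQ : P = Q := by
      rw [← fiberPart_PhiFun P g hg.1, ← fiberPart_PhiFun Q h hh.1, hf]
    subst hPQ
    have hgh : g = h := by
      funext t
      obtain ⟨t1, ht⟩ := t
      obtain ⟨x, hx⟩ := P.nonempty_of_mem_parts ht
      have e1 : (⟨t1, ht⟩ : {t // t ∈ P.parts}) = ⟨P.part x, P.part_mem.2 (mem_univ x)⟩ :=
        Subtype.ext (P.part_eq_of_mem ht hx).symm
      rw [e1]
      exact congrFun hf x
    subst hgh
    rfl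
  · rintro ⟨f, hf⟩
    refine ⟨⟨⟨fiberPart f, fiberPart_parts_card f hf⟩,
      ⟨fun t => f (t.1.min' ((fiberPart f).nonempty_of_mem_parts t.2)), ?_, ?_⟩⟩, ?_⟩
    · rintro ⟨t₁, ht₁⟩ ⟨t₂, ht₂⟩ hg
      dsimp at hg
      set m₁ := t₁.min' ((fiberPart f).nonempty_of_mem_parts ht₁) with hm₁
      set m₂ := t₂.min' ((fiberPart f).nonempty_of_mem_parts ht₂) with hm₂
      have e1 : (fiberPart f).part m₁ = t₁ :=
        (fiberPart f).part_eq_of_mem ht₁ (by rw [hm₁]; exact t₁.min'_mem _)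
      have e2 : (fiberPart f).part m₂ = t₂ :=
        (fiberPart f).part_eq_of_mem ht₂ (by rw [hm₂]; exact t₂.min'_mem _)
      have e3 : (fiberPart f).part m₁ = (fiberPart f).part m₂ := by
        rw [fiberPart_part, fiberPart_part, hg]
      exact Subtype.ext (e1.symm.trans (e3.trans e2))
    · intro j
      obtain ⟨x, rfl⟩ := hf j
      have hxm : x ∈ (fiberPart f).part x := (fiberPart f).mem_part (mem_univ x)
      refine ⟨⟨(fiberPart f).part x, (fiberPart f).part_mem.2 (mem_univ x)⟩, ?_⟩
      exact key_fact f ((fiberPart f).part_mem.2 (mem_univ x)) hxm (Finset.min'_mem _ _)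
    · refine Subtype.ext (funext fun x => ?_)
      exact key_fact f ((fiberPart f).part_mem.2 (mem_univ x))
        ((fiberPart f).mem_part (mem_univ x)) (Finset.min'_mem _ _)

lemma stirling2_mul_factorial (n k : ℕ) :
    stirling2 n k * k ! = Nat.card (SurjType n k) := by
  classical
  rw [← Nat.card_eq_of_bijective _ (Phi_bijective (n := n) (k := k)),
    Nat.card_eq_fintype_card, Fintype.card_sigma]
  have hterm : ∀ P : {P : Finpartition (univ : Finset (Fin n)) // P.parts.card = k},
      Fintype.card {g : {t // t ∈ P.1.parts} → Fin k // Bijective g} = k ! := by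
    intro P
    rw [← Nat.card_eq_fintype_card, Nat.card_congr (bijSubtypeEquiv _ _),
      Nat.card_eq_fintype_card]
    have hcard : Fintype.card {t // t ∈ P.1.parts} = Fintype.card (Fin k) := by
      simp [Fintype.card_coe, P.2]
    rw [Fintype.card_equiv (Fintype.equivOfCardEq hcard), hcard, Fintype.card_fin]
  simp only [hterm, Finset.sum_const, smul_eq_mul]
  rw [stirling2, Nat.card_eq_fintype_card, Finset.card_univ]

lemma card_surj_eq_sum (n k : ℕ) :
    (Nat.card (SurjType n k) : ℤ)
      = ∑ j ∈ Finset.range (k + 1), (-1) ^ j * (k.choose j) * ((k - j : ℕ) : ℤ) ^ n := by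
  classical
  have h1 : Nat.card (SurjType n k)
      = #((univ : Finset (Fin n → Fin k)).filter (fun f => Surjective f)) := by
    rw [Nat.card_eq_fintype_card, Fintype.card_subtype]
  have h2 : (univ : Finset (Fin n → Fin k)).filter (fun f => Surjective f)
      = (univ : Finset (Fin k)).inf
          (fun j => ((univ : Finset (Fin n → Fin k)).filter (fun f => ∀ x, f x ≠ j))ᶜ) := by
    ext f
    simp only [mem_filter, mem_univ, true_and, Finset.mem_inf, Finset.mem_compl, not_forall,
      not_not]
    constructor
    · intro hf j _; obtain ⟨x, hx⟩ := hf j; exact ⟨x, hx⟩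
    · intro hf j; obtain ⟨x, hx⟩ := hf j trivial; exact ⟨x, hx⟩
  have h3 : ∀ t : Finset (Fin k),
      #(t.inf (fun j => (univ : Finset (Fin n → Fin k)).filter (fun f => ∀ x, f x ≠ j)))
        = ((k - #t : ℕ)) ^ n := by
    intro t
    have : t.inf (fun j => (univ : Finset (Fin n → Fin k)).filter (fun f => ∀ x, f x ≠ j))
        = Fintype.piFinset (fun _ : Fin n => tᶜ) := by
      ext f
      simp only [Finset.mem_inf, mem_filter, mem_univ, true_and, Fintype.mem_piFinset,
        Finset.mem_compl]
      constructor
      · intro h x hx; exact h _ hx x rfl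
      · intro h j hj x hfx; exact h x (hfx ▸ hj)
    rw [this, Fintype.card_piFinset]
    simp [Finset.card_compl]
  rw [h1, h2, Finset.inclusion_exclusion_card_inf_compl]
  rw [Finset.sum_powerset]
  rw [Finset.card_univ, Fintype.card_fin]
  refine Finset.sum_congr rfl fun j hj => ?_
  have : ∀ t ∈ (univ : Finset (Fin k)).powersetCard j,
      (-1 : ℤ) ^ #t * #(t.inf (fun i => (univ : Finset (Fin n → Fin k)).filter (fun f => ∀ x, f x ≠ i)))
        = (-1) ^ j * ((k - j : ℕ) : ℤ) ^ n := by
    intro t ht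
    have hc : #t = j := (Finset.mem_powersetCard.1 ht).2
    rw [h3, hc]
    push_cast
    ring
  rw [Finset.sum_congr rfl this, Finset.sum_const, Finset.card_powersetCard, Finset.card_univ,
    Fintype.card_fin]
  push_cast
  ring

open PowerSeries

lemma coeff_exp_sub_one_pow (n k : ℕ) :
    (PowerSeries.coeff (R := ℚ) n) ((exp ℚ - 1) ^ k)
      = (∑ j ∈ Finset.range (k + 1), (-1 : ℚ) ^ (k - j) * (k.choose j) * (j : ℚ) ^ n) / n ! := by
  have hpow : (exp ℚ - 1) ^ k
      = ∑ j ∈ Finset.range (k + 1),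
          PowerSeries.C (R := ℚ) ((-1 : ℚ) ^ (k - j) * (k.choose j)) * exp ℚ ^ j := by
    rw [sub_eq_add_neg, add_pow]
    refine Finset.sum_congr rfl fun j hj => ?_
    have : (-1 : ℚ⟦X⟧) ^ (k - j) = PowerSeries.C (R := ℚ) ((-1 : ℚ) ^ (k - j)) := by
      rw [map_pow, map_neg, map_one]
    rw [map_mul, ← this, map_natCast]
    ring
  rw [hpow, map_sum, Finset.sum_div]
  refine Finset.sum_congr rfl fun j hj => ?_
  rw [PowerSeries.exp_pow_eq_rescale_exp, PowerSeries.coeff_C_mul, PowerSeries.coeff_rescale,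
    PowerSeries.coeff_exp]
  simp only [Algebra.algebraMap_self, RingHom.id_apply]
  field_simp

lemma coeff_exp_sub_one_pow' (n k : ℕ) :
    (PowerSeries.coeff (R := ℚ) n) ((exp ℚ - 1) ^ k) = ((k ! * stirling2 n k : ℕ) : ℚ) / n ! := by
  rw [coeff_exp_sub_one_pow]
  congr 1
  have hA : ((k ! * stirling2 n k : ℕ) : ℚ) = ((Nat.card (SurjType n k) : ℕ) : ℚ) := by
    rw [mul_comm, stirling2_mul_factorial n k]
  have hZ : ((Nat.card (SurjType n k) : ℕ) : ℚ)
      = ∑ j ∈ Finset.range (k + 1), (-1 : ℚ) ^ j * (k.choose j) * ((k - j : ℕ) : ℚ) ^ n := by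
    exact_mod_cast congrArg (fun z : ℤ => (z : ℚ)) (card_surj_eq_sum n k)
  rw [hA, hZ, ← Finset.sum_range_reflect]
  refine Finset.sum_congr rfl fun j hj => ?_
  have hjk : j ≤ k := Nat.lt_succ_iff.1 (Finset.mem_range.1 hj)
  rw [Nat.add_sub_cancel]
  rw [Nat.sub_sub_self hjk, Nat.choose_symm hjk]

lemma coeff_u_pow_eq_zero {i m : ℕ} (hm : m < i) :
    PowerSeries.coeff (R := ℚ) m ((exp ℚ - 1) ^ i) = 0 := by
  have hc : PowerSeries.constantCoeff (R := ℚ) (exp ℚ - 1) = 0 := by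
    simp [PowerSeries.constantCoeff_exp]
  have hdvd : (PowerSeries.X : ℚ⟦X⟧) ^ i ∣ (exp ℚ - 1) ^ i :=
    pow_dvd_pow_of_dvd (PowerSeries.X_dvd_iff.2 hc) i
  exact (PowerSeries.X_pow_dvd_iff.1 hdvd) m hm

lemma telescope (u : ℚ⟦X⟧) (N : ℕ) :
    (∑ i ∈ Finset.Icc 1 N, ((i : ℚ⟦X⟧) + 1) * u ^ i) * (u - 1) ^ 2
      = 2 * u - u ^ 2 - ((N : ℚ⟦X⟧) + 2) * u ^ (N + 1) + ((N : ℚ⟦X⟧) + 1) * u ^ (N + 2) := by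
  induction N with
  | zero => simp
  | succ N ih =>
    rw [Finset.sum_Icc_succ_top (by omega), add_mul, ih]
    push_cast
    ring

lemma coeff_mul_congr {A B D : ℚ⟦X⟧} {n : ℕ} (h : ∀ j ≤ n, PowerSeries.coeff (R := ℚ) j A = PowerSeries.coeff (R := ℚ) j B) :
    PowerSeries.coeff (R := ℚ) n (A * D) = PowerSeries.coeff (R := ℚ) n (B * D) := by
  rw [PowerSeries.coeff_mul, PowerSeries.coeff_mul]
  refine Finset.sum_congr rfl fun p hp => ?_
  rw [h p.1 (Finset.HasAntidiagonal.antidiagonal.fst_le hp)]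

noncomputable def Lser : ℚ⟦X⟧ :=
  PowerSeries.mk fun n =>
    (∑ i ∈ Finset.Icc 1 n, (((i + 1)! : ℚ) / 2) * (stirling2 n i : ℚ)) / (n ! : ℚ)

noncomputable def Tser (N : ℕ) : ℚ⟦X⟧ :=
  ∑ i ∈ Finset.Icc 1 N, ((i : ℚ⟦X⟧) + 1) * (exp ℚ - 1) ^ i

lemma natCast_add_one_eq_C (i : ℕ) : ((i : ℚ⟦X⟧) + 1) = PowerSeries.C (R := ℚ) ((i : ℚ) + 1) := by
  rw [map_add, map_one, map_natCast]

lemma coeff_Lser_eq (n : ℕ) {j : ℕ} (hj : j ≤ n) :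
    PowerSeries.coeff (R := ℚ) j Lser = PowerSeries.coeff (R := ℚ) j (PowerSeries.C (R := ℚ) (1/2) * Tser n) := by
  rw [Lser, PowerSeries.coeff_mk, Tser, PowerSeries.coeff_C_mul, map_sum]
  have hsub : ∑ i ∈ Finset.Icc 1 n, PowerSeries.coeff (R := ℚ) j (((i : ℚ⟦X⟧) + 1) * (exp ℚ - 1) ^ i)
      = ∑ i ∈ Finset.Icc 1 j, PowerSeries.coeff (R := ℚ) j (((i : ℚ⟦X⟧) + 1) * (exp ℚ - 1) ^ i) := by
    refine (Finset.sum_subset (Finset.Icc_subset_Icc_right hj) fun i hi hni => ?_).symm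
    have hji : j < i := by
      simp only [Finset.mem_Icc] at hi hni
      omega
    rw [natCast_add_one_eq_C, PowerSeries.coeff_C_mul, coeff_u_pow_eq_zero hji, mul_zero]
  rw [hsub, Finset.mul_sum, Finset.sum_div]
  refine Finset.sum_congr rfl fun i hi => ?_
  rw [natCast_add_one_eq_C, PowerSeries.coeff_C_mul, coeff_exp_sub_one_pow']
  have hfac : ((i + 1)! : ℚ) = ((i : ℚ) + 1) * (i ! : ℚ) := by
    rw [Nat.factorial_succ]; push_cast; ring
  push_cast
  rw [hfac]
  ring

theorem egf_total_rank' :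
    Lser = -(PowerSeries.C (R := ℚ) (1 / 2)) * (exp ℚ - 1) * (exp ℚ - 3) * ((exp ℚ - 2)⁻¹) ^ 2 := by
  have hc : PowerSeries.constantCoeff (R := ℚ) (exp ℚ - 2) ≠ 0 := by
    rw [map_sub, PowerSeries.constantCoeff_exp, map_ofNat]
    norm_num
  have hne : (exp ℚ - 2 : ℚ⟦X⟧) ≠ 0 := by
    intro h
    apply hc
    rw [h, map_zero]
  apply mul_right_cancel₀ (pow_ne_zero 2 hne)
  have hinv2 : ((exp ℚ - 2)⁻¹) ^ 2 * (exp ℚ - 2) ^ 2 = 1 := by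
    rw [← mul_pow, PowerSeries.inv_mul_cancel _ hc, one_pow]
  have hR : -(PowerSeries.C (R := ℚ) (1 / 2)) * (exp ℚ - 1) * (exp ℚ - 3) * ((exp ℚ - 2)⁻¹) ^ 2
        * (exp ℚ - 2) ^ 2
      = -(PowerSeries.C (R := ℚ) (1 / 2)) * (exp ℚ - 1) * (exp ℚ - 3) := by
    calc -(PowerSeries.C (R := ℚ) (1 / 2)) * (exp ℚ - 1) * (exp ℚ - 3) * ((exp ℚ - 2)⁻¹) ^ 2
        * (exp ℚ - 2) ^ 2
        = -(PowerSeries.C (R := ℚ) (1 / 2)) * (exp ℚ - 1) * (exp ℚ - 3)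
            * (((exp ℚ - 2)⁻¹) ^ 2 * (exp ℚ - 2) ^ 2) := by ring
      _ = _ := by rw [hinv2, mul_one]
  rw [hR]
  ext n
  have step1 : PowerSeries.coeff (R := ℚ) n (Lser * (exp ℚ - 2) ^ 2)
      = PowerSeries.coeff (R := ℚ) n ((PowerSeries.C (R := ℚ) (1/2) * Tser n) * (exp ℚ - 2) ^ 2) :=
    coeff_mul_congr (fun j hj => coeff_Lser_eq n hj)
  rw [step1]
  have step2 : (PowerSeries.C (R := ℚ) (1/2) * Tser n) * (exp ℚ - 2) ^ 2
      = PowerSeries.C (R := ℚ) (1/2) * ((∑ i ∈ Finset.Icc 1 n, ((i : ℚ⟦X⟧) + 1) * (exp ℚ - 1) ^ i)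
          * ((exp ℚ - 1) - 1) ^ 2) := by
    rw [Tser]
    ring
  rw [step2, telescope]
  have hA : PowerSeries.coeff (R := ℚ) n (((n : ℚ⟦X⟧) + 2) * (exp ℚ - 1) ^ (n+1)) = 0 := by
    have h2 : ((n : ℚ⟦X⟧) + 2) = PowerSeries.C (R := ℚ) ((n : ℚ) + 2) := by
      rw [map_add, map_natCast, map_ofNat]
    rw [h2, PowerSeries.coeff_C_mul, coeff_u_pow_eq_zero (by omega), mul_zero]
  have hB : PowerSeries.coeff (R := ℚ) n (((n : ℚ⟦X⟧) + 1) * (exp ℚ - 1) ^ (n+2)) = 0 := by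
    rw [natCast_add_one_eq_C, PowerSeries.coeff_C_mul, coeff_u_pow_eq_zero (by omega), mul_zero]
  have hRHS : -(PowerSeries.C (R := ℚ) (1 / 2)) * (exp ℚ - 1) * (exp ℚ - 3)
      = PowerSeries.C (R := ℚ) (1/2) * (2 * (exp ℚ - 1) - (exp ℚ - 1)^2) := by
    have h3 : (exp ℚ - 3 : ℚ⟦X⟧) = (exp ℚ - 1) - 2 := by ring
    rw [h3]
    ring
  rw [hRHS, PowerSeries.coeff_C_mul, PowerSeries.coeff_C_mul, map_add, map_sub, hA, hB,
    sub_zero, add_zero]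


/-- **E.g.f. of the total-rank numbers.** As formal power series over `ℚ`,
`∑_{n≥0} (xⁿ/n!)·∑_{i=1}^{n} ((i+1)!/2)·S(n,i) = −(1/2)·(eˣ−1)(eˣ−3)·(eˣ−2)^{−2}`. -/
theorem egf_total_rank :
    (PowerSeries.mk fun n =>
        (∑ i ∈ Finset.Icc 1 n, (((i + 1)! : ℚ) / 2) * (stirling2 n i : ℚ)) / (n ! : ℚ)) =
      -(PowerSeries.C (R := ℚ) (1 / 2)) * (PowerSeries.exp ℚ - 1) * (PowerSeries.exp ℚ - 3) *
        ((PowerSeries.exp ℚ - 2)⁻¹) ^ 2 := by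
  exact egf_total_rank'
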